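/- Let Z be positive definite n×n with weighting w = Z⁻¹1, and let Z[ζ] be the positive definite bordered matrix as above with weighting w[ζ]. Then the last component of w[ζ] equals (1 − ζᵀw)/(1 − ζᵀZ⁻¹ζ). -/

import Mathlib

open Matrix

/-- The bordered matrix `Z[ζ] = [[Z, ζ], [ζᵀ, 1]]`. -/
noncomputable def border {n : ℕ} (Z : Matrix (Fin n) (Fin n) ℝ) (ζ : Fin n → ℝ) :
    Matrix (Fin n ⊕ Unit) (Fin n ⊕ Unit) ℝ :=
  Matrix.fromBlocks Z (Matrix.of fun i _ => ζ i) (Matrix.of fun _ j => ζ j)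
    (Matrix.of fun _ _ => (1 : ℝ))

theorem stmt14 {n : ℕ} (Z : Matrix (Fin n) (Fin n) ℝ) (ζ : Fin n → ℝ)
    (hZ : Z.PosDef) (hB : (border Z ζ).PosDef) :
    ((border Z ζ)⁻¹ *ᵥ fun _ => 1) (Sum.inr ()) =
      (1 - ζ ⬝ᵥ (Z⁻¹ *ᵥ fun _ => 1)) / (1 - ζ ⬝ᵥ (Z⁻¹ *ᵥ ζ)) := by
  have hZdet := hZ.det_pos.ne'.isUnit
  have hZinv : Z * Z⁻¹ = 1 := Matrix.mul_nonsing_inv Z hZdet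
  set s : ℝ := 1 - ζ ⬝ᵥ (Z⁻¹ *ᵥ ζ) with hs_def
  -- s > 0 via quadratic form of hB at (-(Z⁻¹ *ᵥ ζ)) ⊕ᵥ 1
  have hs : 0 < s := by
    have hx : (Sum.elim (-(Z⁻¹ *ᵥ ζ)) (fun _ => (1:ℝ)) : Fin n ⊕ Unit → ℝ) ≠ 0 := by
      intro h
      have := congrFun h (Sum.inr ())
      simp at this
    have h := hB.dotProduct_mulVec_pos hx
    have hMx : border Z ζ *ᵥ Sum.elim (-(Z⁻¹ *ᵥ ζ)) (fun _ => (1:ℝ)) =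
        Sum.elim (fun _ => (0:ℝ)) (fun _ => s) := by
      funext x
      rw [border, Matrix.fromBlocks_mulVec]
      cases x with
      | inl i =>
        simp [Sum.elim_comp_inl, Sum.elim_comp_inr, Matrix.mulVec_neg,
          Matrix.mulVec_mulVec, hZinv, Matrix.mulVec, dotProduct]
      | inr u =>
        simp [Sum.elim_comp_inl, Sum.elim_comp_inr, Matrix.mulVec, dotProduct, hs_def]
        ring
    rw [hMx] at h
    simpa [dotProduct, s] using h
  set t : ℝ := (1 - ζ ⬝ᵥ (Z⁻¹ *ᵥ fun _ => 1)) / s with ht_def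
  set v : Fin n → ℝ := Z⁻¹ *ᵥ (fun _ => 1) - t • (Z⁻¹ *ᵥ ζ) with hv_def
  have key : border Z ζ *ᵥ Sum.elim v (fun _ => t) = fun _ => 1 := by
    funext x
    rw [border, Matrix.fromBlocks_mulVec]
    cases x with
    | inl i =>
      simp only [Sum.elim_inl, Sum.elim_comp_inl, Sum.elim_comp_inr, Pi.add_apply]
      have h1 : Z *ᵥ v = (fun _ => 1) - t • ζ := by
        simp [hv_def, Matrix.mulVec_sub, Matrix.mulVec_smul, Matrix.mulVec_mulVec, hZinv]
      have h2 : (Matrix.of fun i (_ : Unit) => ζ i) *ᵥ (fun _ => t) = t • ζ := by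
        funext i; simp [Matrix.mulVec, dotProduct, mul_comm]
      rw [h1, h2]
      simp
    | inr u =>
      simp only [Sum.elim_inr, Sum.elim_comp_inl, Sum.elim_comp_inr, Pi.add_apply]
      have h1 : (Matrix.of fun (_ : Unit) j => ζ j) *ᵥ v = fun _ => ζ ⬝ᵥ v := by
        funext u; simp [Matrix.mulVec, dotProduct]
      have h2 : (Matrix.of fun (_ : Unit) (_ : Unit) => (1:ℝ)) *ᵥ (fun _ => t) = fun _ => t := by
        funext u; simp [Matrix.mulVec, dotProduct]
      rw [h1, h2]
      have hv : ζ ⬝ᵥ v = ζ ⬝ᵥ (Z⁻¹ *ᵥ fun _ => 1) - t * (ζ ⬝ᵥ (Z⁻¹ *ᵥ ζ)) := by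
        simp [hv_def, dotProduct_sub, dotProduct_smul, smul_eq_mul]
      have hts : t * s = 1 - ζ ⬝ᵥ (Z⁻¹ *ᵥ fun _ => 1) := by
        rw [ht_def]; field_simp
      have : ζ ⬝ᵥ v + t = 1 := by
        rw [hv]
        have : t * (ζ ⬝ᵥ (Z⁻¹ *ᵥ ζ)) = t - t * s := by rw [hs_def]; ring
        rw [this]
        linarith [hts]
      simpa using this
  have hBdet := hB.det_pos.ne'.isUnit
  have : (border Z ζ)⁻¹ *ᵥ (fun _ => 1) = Sum.elim v (fun _ => t) := by
    rw [← key, Matrix.mulVec_mulVec, Matrix.nonsing_inv_mul _ hBdet, Matrix.one_mulVec]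
  rw [this]
  simp [ht_def]
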